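/- Let (X_n)_{n∈ω} be a tower of uniform spaces and let A be an adequate family of monotone sequences of uniform pseudometrics. Then the uniformity of the uniform direct limit u-lim X_n is generated by the family of limit pseudometrics { lim d_n : (d_n)_{n∈ω} ∈ A }; that is, the sets { (x,y) : lim d_n(x,y) < ε } for ε > 0 and (d_n) ∈ A form a base of the uniformity of u-lim X_n. -/

import Mathlib

open Set Filter Topology

universe u

/-- A tower of uniform spaces on the ambient set `X`: an increasing sequence
`S 0 ⊆ S 1 ⊆ ⋯` of subsets covering `X`, each `S n` carrying a uniformity which is
the subspace uniformity inherited from `S (n+1)`. -/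
structure UniformTower (X : Type u) where
  S : ℕ → Set X
  mono : Monotone S
  iUnion_eq : ⋃ n, S n = Set.univ
  u : (n : ℕ) → UniformSpace (S n)
  compat : ∀ n, u n = UniformSpace.comap (Set.inclusion (mono (Nat.le_succ n))) (u (n + 1))

namespace UniformTower

variable {X : Type u} (T : UniformTower X)

/-- The uniform direct limit: the strongest (finest) uniformity on `X` making all
the identity inclusions `S n → X` uniformly continuous. -/
noncomputable def dirLim : UniformSpace X :=
  sInf {u' : UniformSpace X |
    ∀ n, @UniformContinuous _ _ (T.u n) u' (Subtype.val : T.S n → X)}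

/-- The height `|x| = min {n : x ∈ S n}` of a point of `X`. -/
noncomputable def height (x : X) : ℕ := sInf {n | x ∈ T.S n}

lemma mem_S_height (x : X) : x ∈ T.S (T.height x) := by
  have hx : x ∈ ⋃ n, T.S n := T.iUnion_eq ▸ Set.mem_univ x
  rcases Set.mem_iUnion.mp hx with ⟨n, hn⟩
  exact Nat.sInf_mem ⟨n, show n ∈ {m | x ∈ T.S m} from hn⟩

/-- Given a sequence of pseudometrics `d n` on the stages `S n`, the distance
`d_{|x,y|}(x,y)` where `|x,y| = max (|x|, |y|)`. -/
noncomputable def chainD (d : (n : ℕ) → T.S n → T.S n → ℝ) (x y : X) : ℝ :=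
  d (max (T.height x) (T.height y))
    ⟨x, T.mono (le_max_left _ _) (T.mem_S_height x)⟩
    ⟨y, T.mono (le_max_right _ _) (T.mem_S_height y)⟩

/-- The limit pseudometric `lim d_n` of a sequence of pseudometrics:
`lim d_n (x,y) = inf { Σ_{i=1}^m d_{|x_{i-1},x_i|}(x_{i-1},x_i) : x = x_0, x_1, …, x_m = y }`. -/
noncomputable def limD (d : (n : ℕ) → T.S n → T.S n → ℝ) (x y : X) : ℝ :=
  sInf {r : ℝ | ∃ (m : ℕ) (c : ℕ → X), c 0 = x ∧ c m = y ∧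
    r = ∑ i ∈ Finset.range m, T.chainD d (c i) (c (i + 1))}

/-- A sequence of pseudometrics on the stages of the tower is monotone if
`d n ≤ d (n+1)` on `S n × S n`. -/
def MonotoneSeq (d : (n : ℕ) → T.S n → T.S n → ℝ) : Prop :=
  ∀ n (x y : T.S n),
    d n x y ≤ d (n + 1) (Set.inclusion (T.mono (Nat.le_succ n)) x)
      (Set.inclusion (T.mono (Nat.le_succ n)) y)

end UniformTower

/-- `d` is a pseudometric: it vanishes on the diagonal, is symmetric and satisfies
the triangle inequality. -/
def IsPseudometric {α : Type*} (d : α → α → ℝ) : Prop :=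
  (∀ x, d x x = 0) ∧ (∀ x y, d x y = d y x) ∧ (∀ x y z, d x z ≤ d x y + d y z)

/-- `d` is a uniform pseudometric on the uniform space `(α, u)`:
for every `ε > 0` the set `{d < ε}` is an entourage. -/
def IsUniformPseudometric {α : Type*} (u : UniformSpace α) (d : α → α → ℝ) : Prop :=
  IsPseudometric d ∧ ∀ ε : ℝ, 0 < ε → {p : α × α | d p.1 p.2 < ε} ∈ @uniformity α u

/-! ### auxiliary lemmas -/

namespace StatementNine

open scoped Uniformity SetRel

lemma psd_nonneg {α : Type*} {d : α → α → ℝ} (h : IsPseudometric d) (x y : α) :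
    0 ≤ d x y := by
  have h1 := h.2.2 x y x
  rw [h.1 x, h.2.1 y x] at h1
  linarith

variable {X : Type u} {T : UniformTower X} {d : (n : ℕ) → T.S n → T.S n → ℝ}

lemma height_le {x : X} {n : ℕ} (h : x ∈ T.S n) : T.height x ≤ n := Nat.sInf_le h

lemma dval_congr {k k' : ℕ} (h : k = k') {x y : X} (hx : x ∈ T.S k) (hy : y ∈ T.S k) :
    d k ⟨x, hx⟩ ⟨y, hy⟩ = d k' ⟨x, h ▸ hx⟩ ⟨y, h ▸ hy⟩ := by subst h; rfl

lemma dval_mono (hm : T.MonotoneSeq d) {m n : ℕ} (h : m ≤ n) {x y : X}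
    (hxm : x ∈ T.S m) (hym : y ∈ T.S m) (hxn : x ∈ T.S n) (hyn : y ∈ T.S n) :
    d m ⟨x, hxm⟩ ⟨y, hym⟩ ≤ d n ⟨x, hxn⟩ ⟨y, hyn⟩ := by
  induction n, h using Nat.le_induction with
  | base => exact le_of_eq rfl
  | succ n hmn ih =>
    have hxn' := T.mono hmn hxm
    have hyn' := T.mono hmn hym
    exact le_trans (ih hxn' hyn') (hm n ⟨x, hxn'⟩ ⟨y, hyn'⟩)

lemma chainD_nonneg (hd : ∀ n, IsPseudometric (d n)) (x y : X) : 0 ≤ T.chainD d x y :=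
  psd_nonneg (hd _) _ _

lemma chainD_comm (hd : ∀ n, IsPseudometric (d n)) (x y : X) :
    T.chainD d x y = T.chainD d y x := by
  unfold UniformTower.chainD
  refine (dval_congr (d := d) (max_comm (T.height x) (T.height y)) _ _).trans ?_
  exact (hd _).2.1 _ _

lemma chainD_self (hd : ∀ n, IsPseudometric (d n)) (x : X) : T.chainD d x x = 0 := (hd _).1 _

lemma chainD_le_dn (hm : T.MonotoneSeq d) {x y : X} {n : ℕ} (hx : x ∈ T.S n) (hy : y ∈ T.S n) :
    T.chainD d x y ≤ d n ⟨x, hx⟩ ⟨y, hy⟩ :=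
  dval_mono hm (max_le (height_le hx) (height_le hy)) _ _ hx hy

lemma chainD_merge (hd : ∀ n, IsPseudometric (d n)) (hm : T.MonotoneSeq d)
    {x q y : X} (hxq : T.height x ≤ T.height q) (hyq : T.height y ≤ T.height q) :
    T.chainD d x y ≤ T.chainD d x q + T.chainD d q y := by
  have hxS : x ∈ T.S (T.height q) := T.mono hxq (T.mem_S_height x)
  have hyS : y ∈ T.S (T.height q) := T.mono hyq (T.mem_S_height y)
  have hqS := T.mem_S_height q
  have h1 : T.chainD d x y ≤ d (T.height q) ⟨x, hxS⟩ ⟨y, hyS⟩ := chainD_le_dn hm hxS hyS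
  have h2 : T.chainD d x q = d (T.height q) ⟨x, hxS⟩ ⟨q, hqS⟩ := by
    unfold UniformTower.chainD
    exact dval_congr (d := d) (max_eq_right hxq) _ _
  have h3 : T.chainD d q y = d (T.height q) ⟨q, hqS⟩ ⟨y, hyS⟩ := by
    unfold UniformTower.chainD
    exact dval_congr (d := d) (max_eq_left hyq) _ _
  have tri := (hd _).2.2 (⟨x, hxS⟩ : T.S (T.height q)) ⟨q, hqS⟩ ⟨y, hyS⟩
  linarith

/-! ### chains as lists -/

variable {X : Type u} {T : UniformTower X} {d : (n : ℕ) → T.S n → T.S n → ℝ} in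
noncomputable def csum (f : X → X → ℝ) : List X → ℝ
  | [] => 0
  | [_] => 0
  | a :: b :: t => f a b + csum f (b :: t)

variable {Y : Type u}

lemma csum_nonneg {f : Y → Y → ℝ} (hf : ∀ a b, 0 ≤ f a b) : ∀ L : List Y, 0 ≤ csum f L
  | [] => le_of_eq rfl
  | [_] => le_of_eq rfl
  | a :: b :: t => by
      have h1 := csum_nonneg hf (b :: t)
      have h2 := hf a b
      simp only [csum]; linarith

lemma csum_append_cons {f : Y → Y → ℝ} : ∀ (l₁ : List Y) (p : Y) (Z : List Y),
    csum f (l₁ ++ p :: Z) = csum f (l₁ ++ [p]) + csum f (p :: Z)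
  | [], p, Z => by
      cases Z <;> simp [csum]
  | [a], p, Z => by
      simp only [List.cons_append, List.nil_append, csum]
      ring
  | a :: b :: t, p, Z => by
      have ih := csum_append_cons (f := f) (b :: t) p Z
      show f a b + csum f ((b :: t) ++ p :: Z) = csum f ((a :: b :: t) ++ [p]) + csum f (p :: Z)
      rw [ih]
      show _ = f a b + csum f ((b :: t) ++ [p]) + csum f (p :: Z)
      ring

lemma chain'_lt_one_of_csum_lt {f : Y → Y → ℝ} (hf : ∀ a b, 0 ≤ f a b) :
    ∀ {L : List Y}, csum f L < 1 → List.Chain' (fun a b => f a b < 1) L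
  | [], _ => List.IsChain.nil
  | [_], _ => List.isChain_singleton _
  | a :: b :: t, h => by
      have h1 := csum_nonneg hf (b :: t)
      have h2 := hf a b
      simp only [csum] at h
      exact List.isChain_cons_cons.2 ⟨by linarith, chain'_lt_one_of_csum_lt hf (by linarith)⟩

/-- "no weak interior local max" predicate for a list w.r.t. a height function. -/
def NWM (ht : Y → ℕ) (L : List Y) : Prop := ∀ (l₁ : List Y) (p q r : Y) (l₂ : List Y),
  L = l₁ ++ p :: q :: r :: l₂ → ht p ≤ ht q → ht q < ht r

lemma NWM_tail {ht : Y → ℕ} {a : Y} {M : List Y} (h : NWM ht (a :: M)) : NWM ht M :=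
  fun l₁ p q r l₂ hM => h (a :: l₁) p q r l₂ (by rw [hM]; rfl)

lemma chain_asc {ht : Y → ℕ} : ∀ (t : List Y) (a b : Y), NWM ht (a :: b :: t) → ht a ≤ ht b →
    List.Chain' (fun p q => ht p < ht q) (b :: t)
  | [], a, b, _, _ => List.isChain_singleton b
  | c :: t', a, b, h, hab => by
      have h1 : ht b < ht c := h [] a b c t' rfl hab
      exact List.isChain_cons_cons.2 ⟨h1, chain_asc t' b c (NWM_tail h) (le_of_lt h1)⟩

lemma split_of_NWM {ht : Y → ℕ} : ∀ (t : List Y) (a b : Y), NWM ht (a :: b :: t) →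
    ∃ L₁ L₂ : List Y, L₁ ≠ [] ∧ L₂ ≠ [] ∧ a :: b :: t = L₁ ++ L₂ ∧ L₁.head? = some a ∧
      List.Chain' (fun p q => ht q < ht p) L₁ ∧ List.Chain' (fun p q => ht p < ht q) L₂
  | t, a, b, h =>
    if hab : ht a ≤ ht b then
      ⟨[a], b :: t, by simp, by simp, rfl, rfl, List.isChain_singleton a, chain_asc t a b h hab⟩
    else by
      push_neg at hab
      match t with
      | [] =>
        exact ⟨[a], [b], by simp, by simp, rfl, rfl, List.isChain_singleton a,
          List.isChain_singleton b⟩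
      | c :: t' => ?_
      obtain ⟨L₁, L₂, h1, h2, h3, h4, h5, h6⟩ := split_of_NWM t' b c (NWM_tail h)
      refine ⟨a :: L₁, L₂, by simp, h2, by rw [List.cons_append, ← h3], rfl, ?_, h6⟩
      refine List.isChain_cons.2 ⟨?_, h5⟩
      intro y hy
      rw [h4, Option.mem_some_iff] at hy
      subst hy
      exact hab

lemma asc_bound {ht : Y → ℕ} {ρ : Y → Y → ℝ} {C : ℝ} (hC : 0 ≤ C)
    (hρ0 : ∀ a, ρ a a = 0) (hρt : ∀ a b c, ρ a c ≤ ρ a b + ρ b c) :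
    ∀ (L : List Y) (a z : Y), List.Chain' (fun p q => ht p < ht q) (a :: L) →
      List.Chain' (fun p q => ρ p q < C * (1/2) ^ (max (ht p) (ht q))) (a :: L) →
      (a :: L).getLast? = some z → ρ a z ≤ C * (1/2) ^ (ht a)
  | [], a, z, _, _, hz => by
      simp only [List.getLast?_singleton, Option.some.injEq] at hz
      subst hz
      rw [hρ0]
      positivity
  | b :: L', a, z, hasc, hρ, hz => by
      have h1 : ht a < ht b := (List.isChain_cons_cons.1 hasc).1
      have h2 : ρ a b < C * (1/2) ^ (max (ht a) (ht b)) := (List.isChain_cons_cons.1 hρ).1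
      have h3 := asc_bound hC hρ0 hρt L' b z (List.isChain_cons_cons.1 hasc).2
        (List.isChain_cons_cons.1 hρ).2 (by simpa using hz)
      rw [max_eq_right h1.le] at h2
      have hpow : C * (1/2:ℝ) ^ (ht b) ≤ C * (1/2) ^ (ht a + 1) :=
        mul_le_mul_of_nonneg_left
          (pow_le_pow_of_le_one (by norm_num) (by norm_num) h1) hC
      have htr := hρt a b z
      have hhalf : C * (1/2:ℝ) ^ (ht a + 1) + C * (1/2) ^ (ht a + 1) = C * (1/2) ^ (ht a) := by
        rw [pow_succ]; ring
      linarith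

lemma vr (hd : ∀ n, IsPseudometric (d n)) (hm : T.MonotoneSeq d) :
    ∀ (k : ℕ) (L : List X), L.length ≤ k →
    ∃ L' : List X, L'.head? = L.head? ∧ L'.getLast? = L.getLast? ∧
      csum (T.chainD d) L' ≤ csum (T.chainD d) L ∧ NWM T.height L' := by
  intro k
  induction k with
  | zero =>
    intro L hL
    have : L = [] := List.length_eq_zero_iff.1 (Nat.le_zero.1 hL)
    subst this
    exact ⟨[], rfl, rfl, le_refl _, fun l₁ p q r l₂ h => by simp at h⟩
  | succ k ih =>
    intro L hL
    by_cases hN : NWM T.height L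
    · exact ⟨L, rfl, rfl, le_refl _, hN⟩
    · unfold NWM at hN
      push_neg at hN
      obtain ⟨l₁, p, q, r, l₂, hdec, hpq, hqr⟩ := hN
      have hlen : (l₁ ++ p :: r :: l₂).length ≤ k := by
        rw [hdec] at hL
        simp only [List.length_append, List.length_cons] at hL ⊢
        omega
      have hhead : (l₁ ++ p :: r :: l₂).head? = L.head? := by
        rw [hdec]; cases l₁ <;> rfl
      have hlast : (l₁ ++ p :: r :: l₂).getLast? = L.getLast? := by
        rw [hdec]
        simp [List.getLast?_append]
      have hcs : csum (T.chainD d) (l₁ ++ p :: r :: l₂) ≤ csum (T.chainD d) L := by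
        rw [hdec, csum_append_cons l₁ p (r :: l₂), csum_append_cons l₁ p (q :: r :: l₂)]
        simp only [csum]
        have := chainD_merge hd hm (x := p) (q := q) (y := r) hpq hqr
        linarith
      obtain ⟨L', h1, h2, h3, h4⟩ := ih (l₁ ++ p :: r :: l₂) hlen
      exact ⟨L', h1.trans hhead, h2.trans hlast, h3.trans hcs, h4⟩

/-! ### basic properties of `limD` -/

def chainSet (T : UniformTower X) (d : (n : ℕ) → T.S n → T.S n → ℝ) (x y : X) : Set ℝ :=
  {r : ℝ | ∃ (m : ℕ) (c : ℕ → X), c 0 = x ∧ c m = y ∧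
    r = ∑ i ∈ Finset.range m, T.chainD d (c i) (c (i + 1))}

lemma limD_def (x y : X) : T.limD d x y = sInf (chainSet T d x y) := rfl

lemma chainD_mem_chainSet (x y : X) : T.chainD d x y ∈ chainSet T d x y := by
  refine ⟨1, fun i => if i = 0 then x else y, if_pos rfl, if_neg one_ne_zero, ?_⟩
  rw [Finset.sum_range_one]
  norm_num

lemma chainSet_bddBelow (hd : ∀ n, IsPseudometric (d n)) (x y : X) :
    BddBelow (chainSet T d x y) := by
  refine ⟨0, ?_⟩
  rintro r ⟨m, c, -, -, rfl⟩
  exact Finset.sum_nonneg fun i _ => chainD_nonneg hd _ _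

lemma chainSet_nonempty (x y : X) : (chainSet T d x y).Nonempty :=
  ⟨_, chainD_mem_chainSet x y⟩

lemma limD_le_chainD (hd : ∀ n, IsPseudometric (d n)) (x y : X) :
    T.limD d x y ≤ T.chainD d x y :=
  csInf_le (chainSet_bddBelow hd x y) (chainD_mem_chainSet x y)

lemma limD_nonneg (hd : ∀ n, IsPseudometric (d n)) (x y : X) : 0 ≤ T.limD d x y := by
  refine le_csInf (chainSet_nonempty x y) ?_
  rintro r ⟨m, c, -, -, rfl⟩
  exact Finset.sum_nonneg fun i _ => chainD_nonneg hd _ _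

lemma limD_self (hd : ∀ n, IsPseudometric (d n)) (x : X) : T.limD d x x = 0 :=
  le_antisymm ((limD_le_chainD hd x x).trans_eq (chainD_self hd x)) (limD_nonneg hd x x)

lemma chainSet_symm_subset (hd : ∀ n, IsPseudometric (d n)) (x y : X) :
    chainSet T d x y ⊆ chainSet T d y x := by
  rintro r ⟨m, c, h0, hm1, rfl⟩
  refine ⟨m, fun i => c (m - i), by simp [hm1], by simp [h0], ?_⟩
  rw [← Finset.sum_range_reflect (fun i => T.chainD d (c (m - i)) (c (m - (i + 1)))) m]
  refine Finset.sum_congr rfl fun i hi => ?_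
  rw [Finset.mem_range] at hi
  have e1 : m - (m - 1 - i) = i + 1 := by omega
  have e2 : m - (m - 1 - i + 1) = i := by omega
  rw [e1, e2]
  exact chainD_comm hd _ _

lemma limD_comm (hd : ∀ n, IsPseudometric (d n)) (x y : X) :
    T.limD d x y = T.limD d y x := by
  rw [limD_def, limD_def]
  exact le_antisymm
    (csInf_le_csInf (chainSet_bddBelow hd x y) (chainSet_nonempty y x)
      (chainSet_symm_subset hd y x))
    (csInf_le_csInf (chainSet_bddBelow hd y x) (chainSet_nonempty x y)
      (chainSet_symm_subset hd x y))

lemma chainSet_add_mem {x y z : X} {r s : ℝ} (hr : r ∈ chainSet T d x y)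
    (hs : s ∈ chainSet T d y z) : r + s ∈ chainSet T d x z := by
  obtain ⟨m, c, h0, hm1, rfl⟩ := hr
  obtain ⟨m', c', h0', hm1', rfl⟩ := hs
  refine ⟨m + m', fun i => if i ≤ m then c i else c' (i - m), by simp [h0], ?_, ?_⟩
  · dsimp only
    by_cases hle : m + m' ≤ m
    · have hm0 : m' = 0 := by omega
      subst hm0
      rw [if_pos (by omega : m + 0 ≤ m)]
      rw [show m + 0 = m from rfl, hm1, ← h0', hm1']
    · rw [if_neg hle]
      have e : m + m' - m = m' := by omega
      rw [e, hm1']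
  · rw [Finset.sum_range_add]
    congr 1
    · refine Finset.sum_congr rfl fun i hi => ?_
      rw [Finset.mem_range] at hi
      dsimp only
      rw [if_pos (by omega : i ≤ m), if_pos (by omega : i + 1 ≤ m)]
    · refine Finset.sum_congr rfl fun i hi => ?_
      dsimp only
      have hc1 : (if m + i ≤ m then c (m + i) else c' (m + i - m)) = c' i := by
        rcases Nat.eq_zero_or_pos i with h0i | h0i
        · subst h0i
          rw [if_pos (by omega : m + 0 ≤ m)]
          rw [show m + 0 = m from rfl, hm1, ← h0']
        · rw [if_neg (by omega)]
          congr 1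
          omega
      have hc2 : (if m + i + 1 ≤ m then c (m + i + 1) else c' (m + i + 1 - m)) = c' (i + 1) := by
        rw [if_neg (by omega)]
        congr 1
        omega
      rw [hc1, hc2]

lemma limD_triangle (hd : ∀ n, IsPseudometric (d n)) (x y z : X) :
    T.limD d x z ≤ T.limD d x y + T.limD d y z := by
  have key : ∀ r ∈ chainSet T d x y, ∀ s ∈ chainSet T d y z, T.limD d x z ≤ r + s :=
    fun r hr s hs => csInf_le (chainSet_bddBelow hd x z) (chainSet_add_mem hr hs)
  have h1 : ∀ r ∈ chainSet T d x y, T.limD d x z - r ≤ T.limD d y z := fun r hr => by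
    rw [limD_def y z]
    refine le_csInf (chainSet_nonempty y z) fun s hs => ?_
    linarith [key r hr s hs]
  have h2 : T.limD d x z - T.limD d y z ≤ T.limD d x y := by
    rw [limD_def x y]
    refine le_csInf (chainSet_nonempty x y) fun r hr => ?_
    linarith [h1 r hr]
  linarith

/-! ### Part A: each `{limD d < ε}` is an entourage of the direct limit -/

lemma half_aux : ∀ ε > (0 : ℝ), ∃ δ > (0 : ℝ), ∀ a < δ, ∀ b < δ, a + b < ε :=
  fun ε hε => ⟨ε / 2, by linarith, fun a ha b hb => by linarith⟩

lemma partA (hd : ∀ n, IsPseudometric (d n)) (hm : T.MonotoneSeq d)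
    (hu : ∀ n, ∀ ε : ℝ, 0 < ε → {p : T.S n × T.S n | d n p.1 p.2 < ε} ∈ @uniformity _ (T.u n))
    {ε : ℝ} (hε : 0 < ε) :
    {q : X × X | T.limD d q.1 q.2 < ε} ∈ @uniformity X T.dirLim := by
  have hbasis := UniformSpace.hasBasis_ofFun (exists_gt (0 : ℝ)) (T.limD d)
    (limD_self hd) (limD_comm hd) (limD_triangle hd) half_aux
  set u' : UniformSpace X := UniformSpace.ofFun (T.limD d)
    (limD_self hd) (limD_comm hd) (limD_triangle hd) half_aux with hu'
  have hmem : u' ∈ {v : UniformSpace X |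
      ∀ n, @UniformContinuous _ _ (T.u n) v (Subtype.val : T.S n → X)} := by
    intro n
    show Filter.Tendsto _ (@uniformity _ (T.u n)) (@uniformity X u')
    refine hbasis.tendsto_right_iff.2 fun ε' hε' => ?_
    filter_upwards [hu n ε' hε'] with p hp
    exact lt_of_le_of_lt ((limD_le_chainD hd _ _).trans (chainD_le_dn hm p.1.2 p.2.2)) hp
  have hle : T.dirLim ≤ u' := sInf_le hmem
  exact hle (hbasis.mem_of_mem hε)

/-! ### lists from chains -/

lemma csum_map_range {f : Y → Y → ℝ} : ∀ (m : ℕ) (c : ℕ → Y),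
    csum f ((List.range (m + 1)).map c) = ∑ i ∈ Finset.range m, f (c i) (c (i + 1))
  | 0, c => by simp [csum]
  | m + 1, c => by
      have hlist : (List.range (m + 1 + 1)).map c
          = c 0 :: (List.range (m + 1)).map (fun i => c (i + 1)) := by
        rw [List.range_succ_eq_map, List.map_cons, List.map_map]
        rfl
      have hlist2 : (List.range (m + 1)).map (fun i => c (i + 1))
          = c 1 :: (List.range m).map (fun i => c (i + 2)) := by
        rw [List.range_succ_eq_map, List.map_cons, List.map_map]
        rfl
      have ih := csum_map_range (f := f) m (fun i => c (i + 1))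
      rw [hlist, hlist2]
      show f (c 0) (c 1) + csum f (c 1 :: (List.range m).map fun i => c (i + 2)) = _
      rw [← hlist2, ih, Finset.sum_range_succ' (fun i => f (c i) (c (i + 1))) m]
      exact add_comm _ _

lemma head_map_range (m : ℕ) (c : ℕ → Y) :
    ((List.range (m + 1)).map c).head? = some (c 0) := by
  rw [List.range_succ_eq_map]
  rfl

lemma getLast_map_range (m : ℕ) (c : ℕ → Y) :
    ((List.range (m + 1)).map c).getLast? = some (c m) := by
  rw [List.range_succ]
  simp

/-- wrapper for `asc_bound` taking `head?` instead of a literal cons. -/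
lemma asc_bound' {ht : Y → ℕ} {ρ : Y → Y → ℝ} {C : ℝ} (hC : 0 ≤ C)
    (hρ0 : ∀ a, ρ a a = 0) (hρt : ∀ a b c, ρ a c ≤ ρ a b + ρ b c)
    (L : List Y) (a z : Y) (ha : L.head? = some a) (hz : L.getLast? = some z)
    (h1 : List.Chain' (fun p q => ht p < ht q) L)
    (h2 : List.Chain' (fun p q => ρ p q < C * (1 / 2) ^ (max (ht p) (ht q))) L) :
    ρ a z ≤ C * (1 / 2) ^ (ht a) := by
  match L, ha with
  | b :: L', ha =>
    have hb : b = a := by simpa using ha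
    subst hb
    exact asc_bound hC hρ0 hρt L' b z h1 h2 hz

/-! ### Part B -/

lemma partB {A : Set ((n : ℕ) → T.S n → T.S n → ℝ)}
    (hA : ∀ d ∈ A, (∀ n, IsUniformPseudometric (T.u n) (d n)) ∧ T.MonotoneSeq d)
    (hadeq : ∀ U : (n : ℕ) → Set (T.S n × T.S n),
      (∀ n, U n ∈ @uniformity _ (T.u n)) →
      ∃ d ∈ A, ∀ n, {p : T.S n × T.S n | d n p.1 p.2 < 1} ⊆ U n)
    {V : Set (X × X)} (hV : V ∈ @uniformity X T.dirLim) :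
    ∃ d ∈ A, {q : X × X | T.limD d q.1 q.2 < 1} ⊆ V := by
  classical
  have hUC : ∀ n, @UniformContinuous _ _ (T.u n) T.dirLim (Subtype.val : T.S n → X) := by
    intro n
    rw [UniformTower.dirLim]
    exact uniformContinuous_sInf_rng.2 fun v hv => hv n
  have exW : ∀ s : Set (X × X), s ∈ @uniformity X T.dirLim →
      ∃ t : Set (X × X), t ∈ @uniformity X T.dirLim ∧ SetRel.IsSymm t ∧ t ○ t ⊆ s := fun s hs => by
    rcases @comp_symm_mem_uniformity_sets X T.dirLim s hs with ⟨t, h1, h2, h3⟩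
    exact ⟨t, h1, h2, h3⟩
  choose g hg1 hg2 hg3 using exW
  let Ws : ℕ → {s : Set (X × X) // s ∈ @uniformity X T.dirLim} := fun k =>
    Nat.rec ⟨V, hV⟩ (fun _ p => ⟨g p.1 p.2, hg1 _ _⟩) k
  let B : ℕ → Set (X × X) := fun k => (Ws (k + 1)).1
  have hB1 : ∀ k, B k ∈ @uniformity X T.dirLim := fun k => (Ws (k + 1)).2
  have hB2 : ∀ k, SetRel.IsSymm (B k) := fun k => hg2 _ _
  have hB3 : ∀ k, B (k + 1) ○ B (k + 1) ⊆ B k := fun k => hg3 _ _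
  have hB0V : B 0 ⊆ V := fun p hp =>
    hg3 V hV ⟨p.2, hp, @refl_mem_uniformity X T.dirLim _ _ (hB1 0)⟩
  have hBanti : Antitone B := antitone_nat_of_succ_le fun k p hp =>
    hB3 k ⟨p.2, hp, @refl_mem_uniformity X T.dirLim _ _ (hB1 (k + 1))⟩
  let FB : FilterBasis (X × X) :=
    { sets := Set.range B
      nonempty := ⟨B 0, Set.mem_range_self 0⟩
      inter_sets := by
        rintro s t ⟨i, rfl⟩ ⟨j, rfl⟩
        exact ⟨B (max i j), Set.mem_range_self _,
          Set.subset_inter (hBanti (le_max_left i j)) (hBanti (le_max_right i j))⟩ }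
  let core : UniformSpace.Core X := UniformSpace.Core.mkOfBasis FB
    (by rintro r ⟨k, rfl⟩ x; exact @refl_mem_uniformity X T.dirLim _ _ (hB1 k))
    (by rintro r ⟨k, rfl⟩
        exact ⟨B k, ⟨k, rfl⟩, fun p hp => by haveI := hB2 k; exact SetRel.symm (R := B k) hp⟩)
    (by rintro r ⟨k, rfl⟩
        exact ⟨B (k + 1), ⟨k + 1, rfl⟩, hB3 k⟩)
  let u₀ : UniformSpace X := UniformSpace.ofCore core
  have hu₀ : @uniformity X u₀ = FB.filter := rfl
  have hbasis : (@uniformity X u₀).HasBasis (fun _ : ℕ => True) B := by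
    rw [hu₀]
    refine FB.hasBasis.to_hasBasis ?_ ?_
    · rintro s ⟨k, rfl⟩; exact ⟨k, trivial, subset_rfl⟩
    · intro k _; exact ⟨B k, Set.mem_range_self k, subset_rfl⟩
  haveI hCG : (@uniformity X u₀).IsCountablyGenerated := hbasis.isCountablyGenerated
  obtain ⟨I, hI⟩ := @UniformSpace.metrizable_uniformity X u₀ hCG
  set ρ : X → X → ℝ := @dist X I.toDist with hρ
  have hρ0 : ∀ a : X, ρ a a = 0 := @dist_self X I
  have hρc : ∀ a b : X, ρ a b = ρ b a := @dist_comm X I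
  have hρt : ∀ a b c : X, ρ a c ≤ ρ a b + ρ b c := @dist_triangle X I
  have hunif : @uniformity X I.toUniformSpace = @uniformity X u₀ := by rw [hI]
  have hmem_unif : ∀ {s : Set (X × X)}, s ∈ @uniformity X u₀ ↔
      ∃ ε > (0:ℝ), ∀ {a b : X}, ρ a b < ε → (a, b) ∈ s := by
    intro s
    rw [← hunif]
    exact @Metric.mem_uniformity_dist X I s
  have hcoarse : ∀ {s : Set (X × X)}, s ∈ @uniformity X u₀ → s ∈ @uniformity X T.dirLim := by
    intro s hs
    rcases hbasis.mem_iff.1 hs with ⟨k, -, hk⟩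
    exact mem_of_superset (hB1 k) hk
  have hball : ∀ ε : ℝ, 0 < ε → {p : X × X | ρ p.1 p.2 < ε} ∈ @uniformity X T.dirLim := fun ε hε =>
    hcoarse (hmem_unif.2 ⟨ε, hε, fun h => h⟩)
  obtain ⟨ε₀, hε₀pos, hε₀⟩ := hmem_unif.1 (hbasis.mem_iff.2 ⟨0, trivial, subset_rfl⟩)
  set C : ℝ := ε₀ / 8 with hCdef
  have hCpos : 0 < C := by positivity
  let U : (n : ℕ) → Set (T.S n × T.S n) := fun n =>
    {p : T.S n × T.S n | ρ p.1.1 p.2.1 < C * (1 / 2) ^ n}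
  have hU : ∀ n, U n ∈ @uniformity _ (T.u n) := by
    intro n
    have hs : {p : X × X | ρ p.1 p.2 < C * (1 / 2) ^ n} ∈ @uniformity X T.dirLim :=
      hball _ (by positivity)
    exact Filter.mem_map.1 (hUC n hs)
  obtain ⟨d, hdA, hdsub⟩ := hadeq U hU
  obtain ⟨hdunif, hdm⟩ := hA d hdA
  have hdps : ∀ n, IsPseudometric (d n) := fun n => (hdunif n).1
  refine ⟨d, hdA, ?_⟩
  rintro ⟨x, y⟩ hxy
  simp only [Set.mem_setOf_eq] at hxy
  rw [limD_def] at hxy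
  obtain ⟨r, hrmem, hr1⟩ := exists_lt_of_csInf_lt (chainSet_nonempty x y) hxy
  obtain ⟨m, c, h0, hm1, rfl⟩ := hrmem
  have hcsumL : csum (T.chainD d) ((List.range (m + 1)).map c) < 1 := by
    rw [csum_map_range]; exact hr1
  have hheadL : ((List.range (m + 1)).map c).head? = some x := by
    rw [head_map_range, h0]
  have hlastL : ((List.range (m + 1)).map c).getLast? = some y := by
    rw [getLast_map_range, hm1]
  obtain ⟨L', hh, hl, hcs, hNWM⟩ :=
    vr hdps hdm ((List.range (m + 1)).map c).length ((List.range (m + 1)).map c) le_rfl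
  rw [hheadL] at hh
  rw [hlastL] at hl
  have hcsum' : csum (T.chainD d) L' < 1 := lt_of_le_of_lt hcs hcsumL
  -- the ρ-bound for single steps
  have hstepkey : ∀ p q : X, T.chainD d p q < 1 →
      ρ p q < C * (1 / 2) ^ (max (T.height p) (T.height q)) := by
    intro p q hpq
    exact hdsub (max (T.height p) (T.height q))
      (show ((⟨p, T.mono (le_max_left _ _) (T.mem_S_height p)⟩ : T.S (max (T.height p) (T.height q))),
        (⟨q, T.mono (le_max_right _ _) (T.mem_S_height q)⟩ : T.S (max (T.height p) (T.height q)))) ∈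
        {pp : T.S (max (T.height p) (T.height q)) × T.S (max (T.height p) (T.height q)) |
          d (max (T.height p) (T.height q)) pp.1 pp.2 < 1} from hpq)
  -- show the pair is in V
  show (x, y) ∈ V
  match L', hh, hl with
  | [], hh, hl => exact absurd hh (by simp)
  | [a], hh, hl =>
    have hax : a = x := by simpa using hh
    have hay : a = y := by simpa using hl
    subst hax; subst hay
    exact hB0V (hε₀ (by rw [hρ0]; exact hε₀pos))
  | a :: b :: t, hh, hl =>
    have hax : a = x := by simpa using hh
    subst hax
    have hchain1 : List.Chain' (fun p q => T.chainD d p q < 1) (a :: b :: t) :=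
      chain'_lt_one_of_csum_lt (chainD_nonneg hdps) hcsum'
    have hstep : List.Chain'
        (fun p q => ρ p q < C * (1 / 2) ^ (max (T.height p) (T.height q))) (a :: b :: t) :=
      List.IsChain.imp (fun p q h => hstepkey p q h) hchain1
    obtain ⟨L₁, L₂, hne1, hne2, hsplit, hhead1, hdesc, hasc⟩ := split_of_NWM t a b hNWM
    rw [hsplit] at hstep hl
    obtain ⟨hstep1, hstep2, hjunc⟩ := List.isChain_append.1 hstep
    obtain ⟨b₁, hb₁⟩ : ∃ b₁, L₁.getLast? = some b₁ :=
      ⟨L₁.getLast hne1, List.getLast?_eq_getLast hne1⟩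
    obtain ⟨b₂, hb₂⟩ : ∃ b₂, L₂.head? = some b₂ :=
      ⟨L₂.head hne2, List.head?_eq_head hne2⟩
    have hlast2 : L₂.getLast? = some y := by
      obtain ⟨w, hw⟩ : ∃ w, L₂.getLast? = some w :=
        ⟨L₂.getLast hne2, List.getLast?_eq_getLast hne2⟩
      rw [List.getLast?_append_of_ne_nil _ hne2] at hl
      rw [← hl, hw]
    -- ascending part : ρ b₂ y ≤ C
    have hasc_bound : ρ b₂ y ≤ C * (1 / 2) ^ (T.height b₂) :=
      asc_bound' hCpos.le hρ0 hρt L₂ b₂ y hb₂ hlast2 hasc hstep2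
    -- descending part via reversal : ρ b₁ a ≤ C
    have hdesc_rev : List.Chain' (fun p q => T.height p < T.height q) L₁.reverse :=
      List.isChain_reverse.2 hdesc
    have hstep1_rev : List.Chain'
        (fun p q => ρ p q < C * (1 / 2) ^ (max (T.height p) (T.height q))) L₁.reverse := by
      refine List.IsChain.imp ?_ (List.isChain_reverse.2 hstep1)
      intro p q h
      rw [max_comm]
      rw [hρc]
      exact h
    have hdesc_bound : ρ b₁ a ≤ C * (1 / 2) ^ (T.height b₁) := by
      refine asc_bound' hCpos.le hρ0 hρt L₁.reverse b₁ a ?_ ?_ hdesc_rev hstep1_rev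
      · rw [List.head?_reverse, hb₁]
      · rw [List.getLast?_reverse, hhead1]
    -- junction
    have hjunc' : ρ b₁ b₂ < C * (1 / 2) ^ (max (T.height b₁) (T.height b₂)) :=
      hjunc b₁ hb₁ b₂ hb₂
    -- pow bounds
    have hpow : ∀ k : ℕ, C * (1 / 2 : ℝ) ^ k ≤ C := fun k =>
      mul_le_of_le_one_right hCpos.le (pow_le_one₀ (by norm_num) (by norm_num))
    have h1 : ρ a b₁ ≤ C := by rw [hρc]; exact (hdesc_bound.trans (hpow _))
    have h2 : ρ b₁ b₂ ≤ C := (hjunc'.le.trans (hpow _))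
    have h3 : ρ b₂ y ≤ C := hasc_bound.trans (hpow _)
    have htot : ρ a y < ε₀ := by
      have t1 := hρt a b₁ y
      have t2 := hρt b₁ b₂ y
      rw [hCdef] at h1 h2 h3
      linarith
    exact hB0V (hε₀ htot)

end StatementNine

/-- Let `(X_n)` be a tower of uniform spaces and `A` an adequate family of monotone sequences
of uniform pseudometrics (adequate: for every sequence `(U_n)` of entourages `U_n` of `X_n`
there is `(d_n) ∈ A` with `{d_n < 1} ⊆ U_n` for all `n`).  Then the uniformity of the uniform
direct limit `u-lim X_n` is generated by the limit pseudometrics `lim d_n`, `(d_n) ∈ A`: the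
sets `{(x,y) : lim d_n (x,y) < ε}` for `ε > 0` and `(d_n) ∈ A` form a base of the uniformity
of `u-lim X_n`. -/
theorem statement9 {X : Type u} (T : UniformTower X)
    (A : Set ((n : ℕ) → T.S n → T.S n → ℝ))
    (hA : ∀ d ∈ A, (∀ n, IsUniformPseudometric (T.u n) (d n)) ∧ T.MonotoneSeq d)
    (hadeq : ∀ U : (n : ℕ) → Set (T.S n × T.S n),
      (∀ n, U n ∈ @uniformity _ (T.u n)) →
      ∃ d ∈ A, ∀ n, {p : T.S n × T.S n | d n p.1 p.2 < 1} ⊆ U n) :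
    (@uniformity X T.dirLim).HasBasis
      (fun p : ((n : ℕ) → T.S n → T.S n → ℝ) × ℝ => p.1 ∈ A ∧ 0 < p.2)
      (fun p => {q : X × X | T.limD p.1 q.1 q.2 < p.2}) := by
  rw [Filter.hasBasis_iff]
  intro V
  constructor
  · intro hV
    obtain ⟨d, hdA, hsub⟩ := StatementNine.partB hA hadeq hV
    exact ⟨(d, 1), ⟨hdA, one_pos⟩, hsub⟩
  · rintro ⟨⟨d, ε⟩, ⟨hdA, hε⟩, hsub⟩
    exact Filter.mem_of_superset
      (StatementNine.partA (fun n => ((hA d hdA).1 n).1) (hA d hdA).2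
        (fun n => ((hA d hdA).1 n).2) hε) hsub
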